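/- For every p₀ ∈ (0,1), define N̂ := inf{n ≥ 0 : φ^n(p₀) < p̂} and N** := inf{n ≥ 0 : φ^n(p₀) < p**}. Then both are finite and N** − 2 ≤ N̂ ≤ N**, where φ(p) := (1−λ)p/(1−λp), p̂ := c(1−δ)/(c(1−δ) + g·(1−δ + λδ(1+δ−λδ))), and p** := c(1−√δ)/(c(1−√δ) + g·(1 − √δ(1−λ))). -/

import Mathlib

lemma bandit_key1 (lam s δ : ℝ) (hl0 : 0 < lam) (hl1 : lam < 1)
    (hs0 : 0 < s) (hs1 : s < 1) (hss : s * s = δ) :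
    (1-s)*(1-δ+lam*δ*(1+δ-lam*δ)) ≤ (1-δ)*(1-s*(1-lam)) := by
  subst hss
  have hs3 : s*(s*s) < 1 := by nlinarith [mul_pos hs0 hs0]
  have h3 : 0 ≤ 1-(1-lam)*(s*(s*s)) := by
    nlinarith [hs3, mul_pos hl0 (mul_pos hs0 (mul_pos hs0 hs0))]
  nlinarith [mul_nonneg (mul_nonneg (mul_nonneg (by linarith : (0:ℝ) ≤ 1-s) hl0.le) hs0.le) h3]

lemma bandit_key2 (lam s δ : ℝ) (hl0 : 0 < lam) (hl1 : lam < 1)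
    (hs0 : 0 < s) (hs1 : s < 1) (hss : s * s = δ) :
    (1-lam)^2*(1-δ)*(1-s*(1-lam)) ≤ (1-s)*(1-δ+lam*δ*(1+δ-lam*δ)) := by
  subst hss
  have hq : (1-lam)^2 ≤ 1 := by nlinarith
  have ha : 0 ≤ 1-(1-lam)^2*s := by nlinarith [mul_nonneg hs0.le (sq_nonneg (1-lam))]
  have h1 : 0 ≤ (1-s)*lam*(1-(1-lam)^2*s) :=
    mul_nonneg (mul_nonneg (by linarith) hl0.le) ha
  have h2 : 0 ≤ (1-s)*lam*(1-lam)*((1-s*s)^2+lam*(s*s)) :=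
    mul_nonneg (mul_nonneg (mul_nonneg (by linarith) hl0.le) (by linarith))
      (by nlinarith [sq_nonneg (1-s*s), mul_pos hl0 (mul_pos hs0 hs0)])
  nlinarith [h1, h2]

lemma bandit_iter_closed (lam p₀ : ℝ) (hl0 : 0 < lam) (hl1 : lam < 1)
    (hp0 : 0 < p₀) (hp1 : p₀ < 1) (n : ℕ) :
    (fun p : ℝ => (1 - lam) * p / (1 - lam * p))^[n] p₀
      = (1-lam)^n * p₀ / ((1-lam)^n * p₀ + (1 - p₀)) := by
  induction n with
  | zero => simp
  | succ n ih =>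
    rw [Function.iterate_succ_apply', ih]
    have hμ : 0 < 1 - lam := by linarith
    have hX : 0 < (1-lam)^n * p₀ := mul_pos (pow_pos hμ n) hp0
    have hD : 0 < (1-lam)^n * p₀ + (1 - p₀) := by nlinarith
    have hD2 : 0 < (1-lam)^(n+1) * p₀ + (1 - p₀) := by
      have := mul_pos (pow_pos hμ (n+1)) hp0; nlinarith
    have e1 : 1 - lam * ((1-lam)^n * p₀ / ((1-lam)^n * p₀ + (1 - p₀)))
        = ((1-lam)^(n+1) * p₀ + (1 - p₀)) / ((1-lam)^n * p₀ + (1 - p₀)) := by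
      rw [eq_div_iff hD.ne']
      field_simp [hD.ne']
      ring
    simp only [e1]
    rw [div_eq_div_iff (by positivity) hD2.ne']
    field_simp [hD.ne']
    ring

/-- For every prior `p₀ ∈ (0,1)`, the cut-off times
`N̂ = inf{n : φⁿ(p₀) < p̂}` and `N** = inf{n : φⁿ(p₀) < p**}` are finite
(the defining sets are nonempty) and satisfy `N** − 2 ≤ N̂ ≤ N**`. -/
theorem Nhat_Nstarstar_comparison
    (c g lam δ : ℝ) (hc : 0 < c) (hg : 0 < g)
    (hlam : lam ∈ Set.Ioo (0 : ℝ) 1) (hδ : δ ∈ Set.Ioo (0 : ℝ) 1) :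
    ∀ p₀ ∈ Set.Ioo (0 : ℝ) 1,
      {n : ℕ | (fun p : ℝ => (1 - lam) * p / (1 - lam * p))^[n] p₀
          < c * (1 - δ) / (c * (1 - δ) + g * (1 - δ + lam * δ * (1 + δ - lam * δ)))}.Nonempty ∧
      {n : ℕ | (fun p : ℝ => (1 - lam) * p / (1 - lam * p))^[n] p₀
          < c * (1 - Real.sqrt δ) /
              (c * (1 - Real.sqrt δ) + g * (1 - Real.sqrt δ * (1 - lam)))}.Nonempty ∧
      sInf {n : ℕ | (fun p : ℝ => (1 - lam) * p / (1 - lam * p))^[n] p₀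
          < c * (1 - Real.sqrt δ) /
              (c * (1 - Real.sqrt δ) + g * (1 - Real.sqrt δ * (1 - lam)))}
        ≤ sInf {n : ℕ | (fun p : ℝ => (1 - lam) * p / (1 - lam * p))^[n] p₀
            < c * (1 - δ) /
                (c * (1 - δ) + g * (1 - δ + lam * δ * (1 + δ - lam * δ)))} + 2 ∧
      sInf {n : ℕ | (fun p : ℝ => (1 - lam) * p / (1 - lam * p))^[n] p₀
          < c * (1 - δ) / (c * (1 - δ) + g * (1 - δ + lam * δ * (1 + δ - lam * δ)))}
        ≤ sInf {n : ℕ | (fun p : ℝ => (1 - lam) * p / (1 - lam * p))^[n] p₀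
            < c * (1 - Real.sqrt δ) /
                (c * (1 - Real.sqrt δ) + g * (1 - Real.sqrt δ * (1 - lam)))} := by
  obtain ⟨hl0, hl1⟩ := hlam
  obtain ⟨hδ0, hδ1⟩ := hδ
  intro p₀ hp₀
  obtain ⟨hp0, hp1⟩ := hp₀
  set s := Real.sqrt δ with hs
  have hs0 : 0 < s := Real.sqrt_pos.mpr hδ0
  have hs1 : s < 1 := by
    rw [hs, show (1:ℝ) = Real.sqrt 1 by simp]
    exact Real.sqrt_lt_sqrt hδ0.le hδ1
  have hss : s * s = δ := Real.mul_self_sqrt hδ0.le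
  clear_value s
  have hμ : 0 < 1 - lam := by linarith
  have hA : 0 < 1 - δ := by linarith
  have hld : lam*δ < 1 := by nlinarith [mul_pos hl0 (show (0:ℝ) < 1-δ by linarith)]
  have hB : 0 < 1 - δ + lam*δ*(1+δ-lam*δ) := by
    nlinarith [mul_pos (mul_pos hl0 hδ0) (show (0:ℝ) < 1+δ-lam*δ by linarith)]
  have hA' : 0 < 1 - s := by linarith
  have hB' : 0 < 1 - s*(1-lam) := by nlinarith
  have crit : ∀ (n : ℕ) (a b : ℝ), 0 < a → 0 < b →
      ((fun p : ℝ => (1 - lam) * p / (1 - lam * p))^[n] p₀ < c*a/(c*a+g*b)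
        ↔ (1-lam)^n * p₀ * (g*b) < c*a*(1-p₀)) := by
    intro n a b ha hb
    rw [bandit_iter_closed lam p₀ hl0 hl1 hp0 hp1 n]
    have hX : 0 < (1-lam)^n * p₀ := mul_pos (pow_pos hμ n) hp0
    have hD : 0 < (1-lam)^n*p₀ + (1-p₀) := by nlinarith
    have hDen : 0 < c*a+g*b := by positivity
    rw [div_lt_div_iff₀ hD hDen]
    constructor <;> intro h <;> nlinarith [h]
  have hne : ∀ a b : ℝ, 0 < a → 0 < b →
      ∃ n : ℕ, (1-lam)^n * p₀ * (g*b) < c*a*(1-p₀) := by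
    intro a b ha hb
    have h1p : 0 < 1 - p₀ := by linarith
    have hε : 0 < c*a*(1-p₀) / (p₀*(g*b)) := by positivity
    obtain ⟨n, hn⟩ := exists_pow_lt_of_lt_one hε (by linarith : 1 - lam < 1)
    refine ⟨n, ?_⟩
    have h2 := mul_lt_mul_of_pos_right hn (by positivity : 0 < p₀*(g*b))
    rw [div_mul_cancel₀ _ (by positivity : p₀*(g*b) ≠ 0)] at h2
    nlinarith [h2]
  -- nonemptiness of both sets
  obtain ⟨nH, hnH⟩ := hne (1-δ) (1-δ+lam*δ*(1+δ-lam*δ)) hA hB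
  obtain ⟨nS, hnS⟩ := hne (1-s) (1-s*(1-lam)) hA' hB'
  have memH : nH ∈ {n : ℕ | (fun p : ℝ => (1 - lam) * p / (1 - lam * p))^[n] p₀
      < c * (1 - δ) / (c * (1 - δ) + g * (1 - δ + lam * δ * (1 + δ - lam * δ)))} :=
    (crit nH _ _ hA hB).mpr hnH
  have memS : nS ∈ {n : ℕ | (fun p : ℝ => (1 - lam) * p / (1 - lam * p))^[n] p₀
      < c * (1 - s) / (c * (1 - s) + g * (1 - s * (1 - lam)))} :=
    (crit nS _ _ hA' hB').mpr hnS
  have k1 := bandit_key1 lam s δ hl0 hl1 hs0 hs1 hss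
  have k2 := bandit_key2 lam s δ hl0 hl1 hs0 hs1 hss
  refine ⟨⟨nH, memH⟩, ⟨nS, memS⟩, ?_, ?_⟩
  · -- sInf S_S ≤ sInf S_H + 2
    set k := sInf {n : ℕ | (fun p : ℝ => (1 - lam) * p / (1 - lam * p))^[n] p₀
      < c * (1 - δ) / (c * (1 - δ) + g * (1 - δ + lam * δ * (1 + δ - lam * δ)))} with hk
    have hkmem := Nat.sInf_mem ⟨nH, memH⟩
    rw [← hk] at hkmem
    clear_value k
    have hk' := (crit k _ _ hA hB).mp hkmem
    have hXk : 0 < (1-lam)^k * p₀ := mul_pos (pow_pos hμ k) hp0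
    have hgoal : (1-lam)^(k+2) * p₀ * (g*(1-s*(1-lam))) < c*(1-s)*(1-p₀) := by
      have hpow : (1-lam)^(k+2) = (1-lam)^k * (1-lam)^2 := by ring
      rw [hpow]
      have h1 := mul_lt_mul_of_pos_right hk'
        (mul_pos (pow_pos hμ 2) hB' : 0 < (1-lam)^2 * (1-s*(1-lam)))
      have h2 := mul_le_mul_of_nonneg_right k2
        (mul_nonneg hc.le (by linarith : (0:ℝ) ≤ 1-p₀))
      have h3 : ((1-lam)^k * (1-lam)^2 * p₀ * (g*(1-s*(1-lam)))) * (1-δ+lam*δ*(1+δ-lam*δ))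
          < (c*(1-s)*(1-p₀)) * (1-δ+lam*δ*(1+δ-lam*δ)) := by
        calc ((1-lam)^k * (1-lam)^2 * p₀ * (g*(1-s*(1-lam)))) * (1-δ+lam*δ*(1+δ-lam*δ))
            = (1-lam)^k * p₀ * (g*(1-δ+lam*δ*(1+δ-lam*δ))) * ((1-lam)^2*(1-s*(1-lam))) := by
              ring
          _ < c*(1-δ)*(1-p₀) * ((1-lam)^2*(1-s*(1-lam))) := h1
          _ = (1-lam)^2*(1-δ)*(1-s*(1-lam)) * (c*(1-p₀)) := by ring
          _ ≤ (1-s)*(1-δ+lam*δ*(1+δ-lam*δ)) * (c*(1-p₀)) := h2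
          _ = (c*(1-s)*(1-p₀)) * (1-δ+lam*δ*(1+δ-lam*δ)) := by ring
      exact lt_of_mul_lt_mul_right h3 hB.le
    exact Nat.sInf_le ((crit (k+2) _ _ hA' hB').mpr hgoal)
  · -- sInf S_H ≤ sInf S_S
    set m := sInf {n : ℕ | (fun p : ℝ => (1 - lam) * p / (1 - lam * p))^[n] p₀
      < c * (1 - s) / (c * (1 - s) + g * (1 - s * (1 - lam)))} with hm
    have hmmem := Nat.sInf_mem ⟨nS, memS⟩
    rw [← hm] at hmmem
    clear_value m
    have hm' := (crit m _ _ hA' hB').mp hmmem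
    have hXm : 0 < (1-lam)^m * p₀ := mul_pos (pow_pos hμ m) hp0
    have hgoal : (1-lam)^m * p₀ * (g*(1-δ+lam*δ*(1+δ-lam*δ))) < c*(1-δ)*(1-p₀) := by
      have h1 := mul_lt_mul_of_pos_right hm' hB
      have h2 := mul_le_mul_of_nonneg_right k1
        (mul_nonneg hc.le (by linarith : (0:ℝ) ≤ 1-p₀))
      have h3 : ((1-lam)^m * p₀ * (g*(1-δ+lam*δ*(1+δ-lam*δ)))) * (1-s*(1-lam))
          < (c*(1-δ)*(1-p₀)) * (1-s*(1-lam)) := by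
        calc ((1-lam)^m * p₀ * (g*(1-δ+lam*δ*(1+δ-lam*δ)))) * (1-s*(1-lam))
            = (1-lam)^m * p₀ * (g*(1-s*(1-lam))) * (1-δ+lam*δ*(1+δ-lam*δ)) := by ring
          _ < c*(1-s)*(1-p₀) * (1-δ+lam*δ*(1+δ-lam*δ)) := h1
          _ = (1-s)*(1-δ+lam*δ*(1+δ-lam*δ)) * (c*(1-p₀)) := by ring
          _ ≤ (1-δ)*(1-s*(1-lam)) * (c*(1-p₀)) := h2
          _ = (c*(1-δ)*(1-p₀)) * (1-s*(1-lam)) := by ring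
      exact lt_of_mul_lt_mul_right h3 hB'.le
    exact Nat.sInf_le ((crit m _ _ hA hB).mpr hgoal)
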